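/- Let T be a compact operator on a Hilbert space H with Hilbert (orthonormal) basis (e_j)_{j∈J}, J countable. For every finite subset I ⊂ J with #I = n, the (n+1)-st singular value of T satisfies μ_{n+1}(T) ≤ ∑_{j∈J∖I} ‖T e_j‖. -/

import Mathlib

set_option maxHeartbeats 800000


open scoped InnerProductSpace ENNReal

/-- Singular value bound: if `(e j)` is a Hilbert basis of `H`, `T` is compact,
`S = √(T*T)` (i.e. `S` positive with `S² = T*T`), and `μ` is the singular value
sequence of `T` given by the min-max principle, then for any finite `I ⊆ J` with
`#I = n` we have `μ (n+1) ≤ ∑_{j ∉ I} ‖T e_j‖`. -/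
theorem stmt_3 {H : Type*} [NormedAddCommGroup H] [InnerProductSpace ℂ H] [CompleteSpace H]
    {J : Type*} [Countable J] (e : HilbertBasis J ℂ H)
    (T S : H →L[ℂ] H) (hT : IsCompactOperator T)
    (hSpos : S.IsPositive) (hS2 : S.comp S = (ContinuousLinearMap.adjoint T).comp T)
    (μ : ℕ → ℝ)
    (hμ : ∀ k : ℕ, μ (k + 1) =
      ⨅ F : {F : Submodule ℂ H // Module.finrank ℂ F = k},
        ⨆ w : {w : H // ‖w‖ = 1 ∧ ∀ v ∈ F.val, ⟪v, w⟫_ℂ = 0},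
          (⟪S w.val, w.val⟫_ℂ).re)
    (n : ℕ) (I : Finset J) (hI : I.card = n) :
    ENNReal.ofReal (μ (n + 1)) ≤ ∑' j : {j : J // j ∉ I}, (‖T (e j.val)‖₊ : ℝ≥0∞) := by
  classical
  by_cases htop : (∑' j : {j : J // j ∉ I}, (‖T (e j.val)‖₊ : ℝ≥0∞)) = ⊤
  · rw [htop]; exact le_top
  -- real summability of the tail norms
  have hsum : Summable (fun j : {j : J // j ∉ I} => ‖T (e j.val)‖) := by
    have h := ENNReal.tsum_coe_ne_top_iff_summable.mp htop
    simpa [coe_nnnorm] using NNReal.summable_coe.mpr h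
  set r : ℝ := ∑' j : {j : J // j ∉ I}, ‖T (e j.val)‖ with hr
  have hr0 : 0 ≤ r := tsum_nonneg (fun _ => norm_nonneg _)
  -- the chosen finite-dimensional subspace
  set F₀ : Submodule ℂ H := Submodule.span ℂ (Set.range fun j : I => e j.val) with hF₀def
  have hF₀rank : Module.finrank ℂ F₀ = n := by
    have hli : LinearIndependent ℂ (fun j : I => e j.val) :=
      (e.orthonormal.comp _ Subtype.val_injective).linearIndependent
    rw [hF₀def, finrank_span_eq_card hli, Fintype.card_coe, hI]
  have hselfS : ContinuousLinearMap.adjoint S = S := by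
    rw [← ContinuousLinearMap.star_eq_adjoint]; exact hSpos.isSelfAdjoint
  -- key real inequality
  have key : μ (n + 1) ≤ r := by
    rw [hμ n]
    have hbdd : BddBelow (Set.range fun F : {F : Submodule ℂ H // Module.finrank ℂ F = n} =>
        ⨆ w : {w : H // ‖w‖ = 1 ∧ ∀ v ∈ F.val, ⟪v, w⟫_ℂ = 0}, (⟪S w.val, w.val⟫_ℂ).re) := by
      refine ⟨0, ?_⟩
      rintro x ⟨F, rfl⟩
      refine Real.iSup_nonneg fun w => ?_
      have := hSpos.2 w.val
      simpa [ContinuousLinearMap.reApplyInnerSelf] using this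
    refine ciInf_le_of_le hbdd ⟨F₀, hF₀rank⟩ (Real.iSup_le (fun w => ?_) hr0)
    obtain ⟨w, hw1, hworth⟩ := w
    -- coefficients
    set c : J → ℂ := fun i => ⟪e i, w⟫_ℂ with hc
    have hczero : ∀ i ∈ I, c i = 0 := by
      intro i hi
      exact hworth (e i) (Submodule.subset_span ⟨⟨i, hi⟩, rfl⟩)
    have hcle : ∀ i, ‖c i‖ ≤ 1 := by
      intro i
      calc ‖c i‖ ≤ ‖e i‖ * ‖w‖ := norm_inner_le_norm _ _
        _ = 1 := by rw [hw1, e.orthonormal.1 i, one_mul]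
    -- expansion of T w
    have hw : HasSum (fun i => c i • e i) w := by
      simpa [hc, HilbertBasis.repr_apply_apply] using e.hasSum_repr w
    have hTw : HasSum (fun i => c i • T (e i)) (T w) := by
      simpa using hw.mapL T
    have hTw' : HasSum (fun j : {j : J // j ∉ I} => c j.val • T (e j.val)) (T w) := by
      refine (hasSum_subtype_iff_of_support_subset (s := {j : J | j ∉ I}) ?_).mpr hTw
      intro i hi
      by_contra hmem
      simp only [Set.mem_setOf_eq, not_not] at hmem
      apply hi
      simp [hczero i hmem]
    have hbnd : ∀ j : {j : J // j ∉ I}, ‖c j.val • T (e j.val)‖ ≤ ‖T (e j.val)‖ := by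
      intro j
      rw [norm_smul]
      calc ‖c j.val‖ * ‖T (e j.val)‖ ≤ 1 * ‖T (e j.val)‖ :=
            mul_le_mul_of_nonneg_right (hcle _) (norm_nonneg _)
        _ = ‖T (e j.val)‖ := one_mul _
    have hnorm_sum : Summable (fun j : {j : J // j ∉ I} => ‖c j.val • T (e j.val)‖) :=
      Summable.of_nonneg_of_le (fun _ => norm_nonneg _) hbnd hsum
    have hTwle : ‖T w‖ ≤ r := by
      calc ‖T w‖ = ‖∑' j : {j : J // j ∉ I}, c j.val • T (e j.val)‖ := by rw [hTw'.tsum_eq]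
        _ ≤ ∑' j : {j : J // j ∉ I}, ‖c j.val • T (e j.val)‖ := norm_tsum_le_tsum_norm hnorm_sum
        _ ≤ r := Summable.tsum_le_tsum hbnd hnorm_sum hsum
    -- ⟨S w, w⟩ ≤ ‖S w‖ = ‖T w‖
    have hSw : ‖S w‖ = ‖T w‖ := by
      have ha : ⟪ContinuousLinearMap.adjoint S (S w), w⟫_ℂ = ⟪S w, S w⟫_ℂ :=
        ContinuousLinearMap.adjoint_inner_left S w (S w)
      have hb : ⟪ContinuousLinearMap.adjoint T (T w), w⟫_ℂ = ⟪T w, T w⟫_ℂ :=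
        ContinuousLinearMap.adjoint_inner_left T w (T w)
      have hcc : S (S w) = ContinuousLinearMap.adjoint T (T w) := by
        have := congrArg (fun A : H →L[ℂ] H => A w) hS2
        simpa using this
      have hinner : ⟪S w, S w⟫_ℂ = ⟪T w, T w⟫_ℂ := by
        rw [← ha, hselfS, hcc, hb]
      have h1 := (inner_self_eq_norm_sq_to_K (𝕜 := ℂ) (S w)).symm.trans
        (hinner.trans (inner_self_eq_norm_sq_to_K (𝕜 := ℂ) (T w)))
      have h1' : ‖S w‖ ^ 2 = ‖T w‖ ^ 2 := by exact_mod_cast h1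
      nlinarith [norm_nonneg (S w), norm_nonneg (T w)]
    calc (⟪S w, w⟫_ℂ).re ≤ ‖⟪S w, w⟫_ℂ‖ := by
          exact Complex.re_le_norm _
      _ ≤ ‖S w‖ * ‖w‖ := norm_inner_le_norm _ _
      _ = ‖T w‖ := by rw [hw1, mul_one, hSw]
      _ ≤ r := hTwle
  -- pass to ℝ≥0∞
  have hto : (∑' j : {j : J // j ∉ I}, (‖T (e j.val)‖₊ : ℝ≥0∞)) = ENNReal.ofReal r := by
    rw [← ENNReal.ofReal_toReal htop]
    congr 1
    rw [ENNReal.tsum_toReal_eq (fun _ => ENNReal.coe_ne_top)]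
    simp [hr]
  rw [hto]
  exact ENNReal.ofReal_le_ofReal key
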